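/- Every irreducible B(ξ)-representation (V, ρ, X) is isomorphic to W(η) for some character η of Γ with η|_Λ = ξ, where an isomorphism of B(ξ)-representations is a linear isomorphism intertwining X and every ρ(h). -/

import Mathlib

noncomputable section

/-- `(V, ρ, X)` is a `B(ξ)`-representation: `ρ` is a group homomorphism (recorded via
multiplicativity and unitality), `ρ(h)∘X = χ₁(h)·(X∘ρ(h))` for all `h`, `X^r = id`,
and `ρ(g) = ξ(g)·id` for all `g ∈ Λ`. -/
def IsBRep {Γ : Type*} [CommGroup Γ] (χ₁ : Γ →* ℂˣ) (Λ : Subgroup Γ) (ξ : ↥Λ →* ℂˣ)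
    (r : ℕ) {V : Type*} [AddCommGroup V] [Module ℂ V]
    (ρ : Γ → Module.End ℂ V) (X : Module.End ℂ V) : Prop :=
  (∀ a b : Γ, ρ (a * b) = ρ a * ρ b) ∧ ρ 1 = 1 ∧
  (∀ h : Γ, ρ h * X = (χ₁ h : ℂ) • (X * ρ h)) ∧
  X ^ r = 1 ∧
  ∀ g : Λ, ρ (g : Γ) = (ξ g : ℂ) • (1 : Module.End ℂ V)

/-- A subspace `W` is stable under `X` and all `ρ(h)`. -/
def BStable {Γ : Type*} {V : Type*} [AddCommGroup V] [Module ℂ V]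
    (ρ : Γ → Module.End ℂ V) (X : Module.End ℂ V) (W : Submodule ℂ V) : Prop :=
  (∀ v ∈ W, X v ∈ W) ∧ ∀ h : Γ, ∀ v ∈ W, ρ h v ∈ W

/-- Irreducibility: `V ≠ 0` and the only stable subspaces are `0` and `V`. -/
def BIrred {Γ : Type*} {V : Type*} [AddCommGroup V] [Module ℂ V]
    (ρ : Γ → Module.End ℂ V) (X : Module.End ℂ V) : Prop :=
  (∃ v : V, v ≠ 0) ∧ ∀ W : Submodule ℂ V, BStable ρ X W → W = ⊥ ∨ W = ⊤

/-- The action of `h ∈ Γ` on `W(η)`, with `ρ(h)·f_i = η(h)·χ₁(h)^i·f_i` on the basis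
`(f_i)_{i ∈ ℤ/rℤ}` of `ℤ/rℤ → ℂ`. -/
def wRho (r : ℕ) {Γ : Type*} [CommGroup Γ] (χ₁ η : Γ →* ℂˣ) (h : Γ) :
    Module.End ℂ (ZMod r → ℂ) where
  toFun v := fun i => (η h : ℂ) * (χ₁ h : ℂ) ^ i.val * v i
  map_add' v w := by funext i; simp [mul_add]
  map_smul' a v := by funext i; simp [smul_eq_mul]; ring

/-- The operator `X` on `W(η)`, with `X·f_i = f_{i+1}` (indices modulo `r`). -/
def wX (r : ℕ) : Module.End ℂ (ZMod r → ℂ) where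
  toFun v := fun i => v (i - 1)
  map_add' _ _ := rfl
  map_smul' _ _ := rfl

/-- Case (II), Lemma "basic", classification: every irreducible `B(ξ)`-representation
`(V, ρ, X)` is isomorphic to `W(η)` for some character `η` of `Γ` with `η|_Λ = ξ`, via a
linear isomorphism intertwining `X` and every `ρ(h)`. -/
theorem irreducible_BRep_iso_W {Γ : Type*} [CommGroup Γ] [Fintype Γ] (r : ℕ) (hr : 1 < r)
    (χ₁ : Γ →* ℂˣ) (hχ : orderOf χ₁ = r)
    (Λ : Subgroup Γ) (hΛ : ∀ g ∈ Λ, χ₁ g = 1) (ξ : ↥Λ →* ℂˣ)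
    (V : Type*) [AddCommGroup V] [Module ℂ V] [FiniteDimensional ℂ V]
    (ρ : Γ → Module.End ℂ V) (X : Module.End ℂ V)
    (hrep : IsBRep χ₁ Λ ξ r ρ X) (hirr : BIrred ρ X) :
    ∃ η : Γ →* ℂˣ, (∀ g : Λ, η (g : Γ) = ξ g) ∧
      ∃ φ : V ≃ₗ[ℂ] (ZMod r → ℂ),
        (∀ v : V, φ (X v) = wX r (φ v)) ∧
        ∀ (h : Γ) (v : V), φ (ρ h v) = wRho r χ₁ η h (φ v) := by
  classical
  haveI : NeZero r := ⟨by omega⟩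
  obtain ⟨hmul, hone, hXcomm, hXr, hlam⟩ := hrep
  obtain ⟨v0, hv0⟩ := hirr.1
  haveI : Nontrivial V := ⟨⟨v0, 0, hv0⟩⟩
  -- ρ is a commuting family
  have hρcomm : ∀ a b : Γ, ρ a * ρ b = ρ b * ρ a := by
    intro a b; rw [← hmul, ← hmul, mul_comm a b]
  -- Step 1 : a common eigenvector for all ρ h.
  have key : ∀ s : Finset Γ, ∃ W : Submodule ℂ V, W ≠ ⊥ ∧
      (∀ g : Γ, ∀ x ∈ W, ρ g x ∈ W) ∧
      ∀ h ∈ s, ∃ c : ℂ, ∀ x ∈ W, ρ h x = c • x := by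
    intro s
    induction s using Finset.induction_on with
    | empty =>
        refine ⟨⊤, ?_, fun g x _ => Submodule.mem_top, by simp⟩
        exact top_ne_bot
    | @insert h s hns ih =>
        obtain ⟨W, hWne, hWst, hWsc⟩ := ih
        haveI : Nontrivial W := Submodule.nontrivial_iff_ne_bot.2 hWne
        set T : Module.End ℂ W := (ρ h).restrict (hWst h) with hT
        obtain ⟨μ, hμ⟩ := Module.End.exists_eigenvalue T
        obtain ⟨wv, hwv⟩ := hμ.exists_hasEigenvector
        have hwv1 : ρ h (wv : V) = μ • (wv : V) := by
          have := hwv.apply_eq_smul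
          have := congrArg (Subtype.val) this
          simpa [hT, LinearMap.restrict_apply] using this
        refine ⟨W ⊓ Module.End.eigenspace (ρ h) μ, ?_, ?_, ?_⟩
        · rw [Submodule.ne_bot_iff]
          exact ⟨(wv : V), ⟨wv.2, Module.End.mem_eigenspace_iff.2 hwv1⟩,
            by simpa [Submodule.coe_eq_zero] using hwv.right⟩
        · intro g x hx
          rw [Submodule.mem_inf] at hx ⊢
          obtain ⟨hx1, hx2⟩ := hx
          refine ⟨hWst g x hx1, Module.End.mem_eigenspace_iff.2 ?_⟩
          rw [Module.End.mem_eigenspace_iff] at hx2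
          have : ρ h (ρ g x) = ρ g (ρ h x) := by
            rw [← Module.End.mul_apply, ← Module.End.mul_apply, hρcomm]
          rw [this, hx2, map_smul]
        · intro h' hh'
          rcases Finset.mem_insert.1 hh' with rfl | hh'
          · exact ⟨μ, fun x hx => Module.End.mem_eigenspace_iff.1 hx.2⟩
          · obtain ⟨c, hc⟩ := hWsc h' hh'
            exact ⟨c, fun x hx => hc x hx.1⟩
  obtain ⟨W, hWne, hWst, hWsc⟩ := key Finset.univ
  obtain ⟨v, hvW, hv⟩ := Submodule.exists_mem_ne_zero_of_ne_bot hWne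
  -- the character values
  choose c hc using fun h : Γ => hWsc h (Finset.mem_univ h)
  have hcv : ∀ h : Γ, ρ h v = c h • v := fun h => hc h v hvW
  have hsinj : Function.Injective (fun t : ℂ => t • v) := smul_left_injective ℂ hv
  have hcmul : ∀ a b : Γ, c (a * b) = c a * c b := by
    intro a b
    apply hsinj
    show c (a * b) • v = (c a * c b) • v
    have h2 : ρ (a * b) v = ρ a (ρ b v) := by rw [hmul]; rfl
    rw [← hcv, h2, hcv b, map_smul, hcv a, smul_smul, mul_comm (c b)]
  have hc1 : c 1 = 1 := by
    apply hsinj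
    show c 1 • v = (1 : ℂ) • v
    rw [← hcv, one_smul]
    exact congrArg (fun f : Module.End ℂ V => f v) hone
  have hcinv : ∀ h : Γ, c h * c h⁻¹ = 1 := by
    intro h; rw [← hcmul, mul_inv_cancel, hc1]
  -- the character η
  set η : Γ →* ℂˣ :=
    { toFun := fun h => ⟨c h, c h⁻¹, hcinv h, by rw [mul_comm]; exact hcinv h⟩
      map_one' := by ext; exact hc1
      map_mul' := fun a b => by ext; exact hcmul a b } with hη
  have hηval : ∀ h : Γ, (η h : ℂ) = c h := fun _ => rfl
  refine ⟨η, ?_, ?_⟩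
  · intro g
    ext
    apply hsinj
    show (η (g : Γ) : ℂ) • v = (ξ g : ℂ) • v
    rw [hηval, ← hcv]
    have := congrArg (fun f : Module.End ℂ V => f v) (hlam g)
    simpa using this
  -- Step 2 : the vectors w i = X^i v
  have hXinv : ∀ u : V, (X ^ (r - 1)) (X u) = u := by
    intro u
    rw [← Module.End.mul_apply, ← pow_succ, Nat.sub_add_cancel (by omega), hXr,
      Module.End.one_apply]
  have hXinj : Function.Injective X := fun a b hab => by
    rw [← hXinv a, ← hXinv b, hab]
  have hXpinj : ∀ k : ℕ, Function.Injective (X ^ k : Module.End ℂ V) := by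
    intro k
    induction k with
    | zero => intro a b hab; simpa using hab
    | succ k ihk =>
        intro a b hab
        rw [pow_succ] at hab
        exact hXinj (ihk hab)
  set w : ZMod r → V := fun i => (X ^ i.val) v with hw
  have hwne : ∀ i, w i ≠ 0 := by
    intro i hzero
    exact hv (hXpinj i.val (by simpa using hzero))
  have hXnat : ∀ a : ℕ, (X ^ a) v = w (a : ZMod r) := by
    intro a
    have h1 : (a : ZMod r).val = a % r := ZMod.val_natCast r a
    rw [hw]
    simp only [h1]
    conv_lhs => rw [← Nat.div_add_mod a r, pow_add, pow_mul, hXr, one_pow, one_mul]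
  have hival : ∀ i : ZMod r, ((i.val : ℕ) : ZMod r) = i := by
    intro i; simp [ZMod.natCast_val, ZMod.cast_id]
  have hXw : ∀ i, X (w i) = w (i + 1) := by
    intro i
    have : X (w i) = (X ^ (i.val + 1)) v := by
      rw [hw, pow_succ', Module.End.mul_apply]
    rw [this, hXnat]
    congr 1
    push_cast
    rw [hival]
  have hXpowcomm : ∀ (h : Γ) (k : ℕ),
      ρ h * X ^ k = ((χ₁ h : ℂ) ^ k) • (X ^ k * ρ h) := by
    intro h k
    induction k with
    | zero => simp
    | succ k ihk =>
        calc ρ h * X ^ (k + 1) = (ρ h * X ^ k) * X := by rw [pow_succ, mul_assoc]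
          _ = ((χ₁ h : ℂ) ^ k • (X ^ k * ρ h)) * X := by rw [ihk]
          _ = (χ₁ h : ℂ) ^ k • (X ^ k * (ρ h * X)) := by
              rw [smul_mul_assoc, mul_assoc]
          _ = (χ₁ h : ℂ) ^ k • (X ^ k * ((χ₁ h : ℂ) • (X * ρ h))) := by rw [hXcomm]
          _ = ((χ₁ h : ℂ) ^ k * (χ₁ h : ℂ)) • ((X ^ k * X) * ρ h) := by
              rw [mul_smul_comm, smul_smul, mul_assoc]
          _ = ((χ₁ h : ℂ) ^ (k + 1)) • (X ^ (k + 1) * ρ h) := by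
              rw [← pow_succ, ← pow_succ]
  have hρw : ∀ (h : Γ) (i : ZMod r),
      ρ h (w i) = ((η h : ℂ) * (χ₁ h : ℂ) ^ i.val) • w i := by
    intro h i
    have := congrArg (fun f : Module.End ℂ V => f v) (hXpowcomm h i.val)
    simp only [Module.End.mul_apply, LinearMap.smul_apply] at this
    rw [hw]
    simp only [this, hcv, map_smul, hηval, smul_smul]
    rw [mul_comm (c h)]
  -- Step 3 : an element h₀ with χ₁ h₀ of order r
  obtain ⟨h₀, hh₀⟩ : ∃ h₀ : Γ, orderOf (χ₁ h₀ : ℂˣ) = r := by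
    set H := χ₁.range with hH
    haveI : Finite H := Set.Finite.to_subtype (Set.finite_range χ₁)
    obtain ⟨g, hg⟩ := IsCyclic.exists_ofOrder_eq_natCard (α := H)
    obtain ⟨h₀, hh₀⟩ := g.2
    refine ⟨h₀, ?_⟩
    have hord : orderOf (χ₁ h₀ : ℂˣ) = Nat.card H := by
      rw [hh₀, Subgroup.orderOf_coe, hg]
    have h1 : r ∣ Nat.card H := by
      rw [← hχ]
      apply orderOf_dvd_of_pow_eq_one
      ext h
      rw [MonoidHom.pow_apply, MonoidHom.one_apply]
      have hdvd : orderOf (χ₁ h : ℂˣ) ∣ Nat.card H := by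
        rw [← Subgroup.orderOf_mk (H := H) (χ₁ h) ⟨h, rfl⟩]
        exact orderOf_dvd_natCard _
      exact_mod_cast congrArg Units.val (orderOf_dvd_iff_pow_eq_one.1 hdvd)
    have hχr : (χ₁ h₀) ^ r = 1 := by
      have : (χ₁ ^ r) h₀ = (1 : Γ →* ℂˣ) h₀ := by rw [← hχ, pow_orderOf_eq_one χ₁]
      simpa [MonoidHom.pow_apply] using this
    have h2 : Nat.card H ∣ r := by
      rw [← hg, ← Subgroup.orderOf_coe g, ← hh₀]
      exact orderOf_dvd_of_pow_eq_one hχr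
    rw [hord]
    exact Nat.dvd_antisymm h2 h1
  have hordc : orderOf (χ₁ h₀ : ℂ) = r := by rw [orderOf_units, hh₀]
  -- eigenvalues of ρ h₀ on the w i are pairwise distinct
  set μ : ZMod r → ℂ := fun i => (η h₀ : ℂ) * (χ₁ h₀ : ℂ) ^ i.val with hμdef
  have hμinj : Function.Injective μ := by
    intro i j hij
    have hij' : (χ₁ h₀ : ℂ) ^ i.val = (χ₁ h₀ : ℂ) ^ j.val :=
      mul_left_cancel₀ (Units.ne_zero (η h₀)) hij
    have hval : i.val = j.val := by
      refine pow_injOn_Iio_orderOf ?_ ?_ hij' <;>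
        simp [hordc, Set.mem_Iio, ZMod.val_lt]
    rw [← hival i, ← hival j, hval]
  have hli : LinearIndependent ℂ w :=
    Module.End.eigenvectors_linearIndependent' (ρ h₀) μ hμinj w
      (fun i => ⟨Module.End.mem_eigenspace_iff.2 (hρw h₀ i), hwne i⟩)
  -- Step 4 : the w i span V
  set WS : Submodule ℂ V := Submodule.span ℂ (Set.range w) with hWS
  have hstab : ∀ f : Module.End ℂ V, (∀ i, f (w i) ∈ WS) → ∀ x ∈ WS, f x ∈ WS := by
    intro f hf x hx
    have hle : Submodule.map f WS ≤ WS := by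
      rw [hWS, Submodule.map_span, Submodule.span_le]
      rintro _ ⟨_, ⟨i, rfl⟩, rfl⟩
      exact hf i
    exact hle (Submodule.mem_map_of_mem hx)
  have hspan : WS = ⊤ := by
    refine (hirr.2 WS ⟨?_, ?_⟩).resolve_left ?_
    · exact hstab X fun i => by
        rw [hXw i]; exact Submodule.subset_span ⟨i + 1, rfl⟩
    · exact fun h => hstab (ρ h) fun i => by
        rw [hρw h i]
        exact Submodule.smul_mem _ _ (Submodule.subset_span ⟨i, rfl⟩)
    · intro hbot
      have hmem : w 0 ∈ WS := Submodule.subset_span ⟨0, rfl⟩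
      rw [hbot, Submodule.mem_bot] at hmem
      exact hwne 0 hmem
  -- Step 5 : the isomorphism
  set ψ : (ZMod r → ℂ) →ₗ[ℂ] V :=
    { toFun := fun d => ∑ i, d i • w i
      map_add' := fun d₁ d₂ => by
        simp [add_smul, Finset.sum_add_distrib]
      map_smul' := fun a d => by
        simp [smul_smul, Finset.smul_sum] } with hψ
  have hψapp : ∀ d : ZMod r → ℂ, ψ d = ∑ i, d i • w i := fun _ => rfl
  have hψsingle : ∀ i : ZMod r, ψ (Pi.single i 1) = w i := by
    intro i
    rw [hψapp]
    rw [Finset.sum_eq_single i]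
    · simp
    · intro j _ hji; simp [Pi.single_apply, hji]
    · simp
  have hψbij : Function.Bijective ψ := by
    constructor
    · rw [← LinearMap.ker_eq_bot, LinearMap.ker_eq_bot']
      intro d hd
      have := Fintype.linearIndependent_iff.1 hli d (by rw [← hψapp]; exact hd)
      funext i; exact this i
    · intro x
      have hx : x ∈ WS := by rw [hspan]; exact Submodule.mem_top
      have hle : WS ≤ LinearMap.range ψ := by
        rw [hWS, Submodule.span_le]
        rintro _ ⟨i, rfl⟩
        exact ⟨Pi.single i 1, hψsingle i⟩
      exact hle hx
  set e : (ZMod r → ℂ) ≃ₗ[ℂ] V := LinearEquiv.ofBijective ψ hψbij with he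
  refine ⟨e.symm, ?_, ?_⟩
  · intro x
    set d : ZMod r → ℂ := e.symm x with hd
    have hx : x = ψ d := by rw [hd]; exact (e.apply_symm_apply x).symm
    have hA : X (ψ d) = ψ (wX r d) := by
      rw [hψapp, map_sum, hψapp]
      simp only [map_smul, hXw]
      refine Fintype.sum_equiv (Equiv.addRight (1 : ZMod r))
        (fun i => d i • w (i + 1)) (fun j => (wX r) d j • w j) (fun i => ?_)
      show d i • w (i + 1) = d (i + 1 - 1) • w (i + 1)
      rw [add_sub_cancel_right]
    have : e.symm (X x) = e.symm (ψ (wX r d)) := by rw [hx, hA]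
    rw [this]
    have : ψ (wX r d) = e (wX r d) := rfl
    rw [this, e.symm_apply_apply]
  · intro h x
    set d : ZMod r → ℂ := e.symm x with hd
    have hx : x = ψ d := by rw [hd]; exact (e.apply_symm_apply x).symm
    have hB : ρ h (ψ d) = ψ (wRho r χ₁ η h d) := by
      rw [hψapp, map_sum, hψapp]
      apply Finset.sum_congr rfl
      intro i _
      rw [map_smul, hρw h i]
      show _ = ((η h : ℂ) * (χ₁ h : ℂ) ^ i.val * d i) • w i
      rw [smul_smul, mul_comm (d i)]
    have : e.symm (ρ h x) = e.symm (ψ (wRho r χ₁ η h d)) := by rw [hx, hB]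
    rw [this]
    have : ψ (wRho r χ₁ η h d) = e (wRho r χ₁ η h d) := rfl
    rw [this, e.symm_apply_apply]
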